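/- Let K be a field with at least 3 elements and n ≥ 2. The maximal dimension of an affine subspace of M(n×n, K) all of whose elements are nilpotent of rank exactly 1 is n-2. -/

import Mathlib

open Matrix Module

section Aux

variable {n : ℕ} {K : Type*} [Field K]

private lemma myVecMulVec_smul (c : K) (x y : Fin n → K) :
    vecMulVec x (c • y) = c • vecMulVec x y := by
  ext i j; simp [vecMulVec_apply, smul_eq_mul]; ring

private lemma mySmul_vecMulVec (c : K) (x y : Fin n → K) :
    vecMulVec (c • x) y = c • vecMulVec x y := by
  ext i j; simp [vecMulVec_apply, smul_eq_mul]; ring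

private lemma myVecMulVec_add (x a b : Fin n → K) :
    vecMulVec x (a + b) = vecMulVec x a + vecMulVec x b := by
  ext i j; simp [vecMulVec_apply, mul_add]

private lemma myVecMulVec_transpose (x y : Fin n → K) :
    (vecMulVec x y)ᵀ = vecMulVec y x := by
  ext i j; simp [vecMulVec_apply, transpose_apply, mul_comm]

private lemma myVecMulVec_zero (x : Fin n → K) : vecMulVec x (0 : Fin n → K) = 0 := by
  ext i j; simp [vecMulVec_apply]

private lemma myVecMulVec_mulVec (x y v : Fin n → K) :
    vecMulVec x y *ᵥ v = (y ⬝ᵥ v) • x := by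
  funext i
  simp only [mulVec, dotProduct, vecMulVec_apply, Pi.smul_apply, smul_eq_mul,
    Finset.sum_mul]
  exact Finset.sum_congr rfl fun j _ => by ring

private lemma myTrace_vecMulVec (x y : Fin n → K) :
    trace (vecMulVec x y) = x ⬝ᵥ y := by
  simp [Matrix.trace, Matrix.diag, vecMulVec_apply, dotProduct]

private lemma dot_zero_of_nilpotent {x y : Fin n → K}
    (h : IsNilpotent (vecMulVec x y)) : y ⬝ᵥ x = 0 := by
  have h2 := Matrix.isNilpotent_trace_of_isNilpotent h
  rw [myTrace_vecMulVec] at h2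
  rw [dotProduct_comm]
  exact h2.eq_zero

private lemma isNilpotent_vecMulVec {x y : Fin n → K} (h : y ⬝ᵥ x = 0) :
    IsNilpotent (vecMulVec x y) := by
  refine ⟨2, ?_⟩
  ext i j
  simp only [pow_two, Matrix.mul_apply, vecMulVec_apply, Matrix.zero_apply]
  have : ∑ k, (x i * y k) * (x k * y j) = (x i * y j) * (y ⬝ᵥ x) := by
    rw [dotProduct, Finset.mul_sum]
    exact Finset.sum_congr rfl fun k _ => by ring
  rw [this, h, mul_zero]

private lemma exists_vecMulVec_of_rank_eq_one {M : Matrix (Fin n) (Fin n) K}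
    (h : M.rank = 1) : ∃ x y : Fin n → K, x ≠ 0 ∧ y ≠ 0 ∧ M = vecMulVec x y := by
  have hrank := h
  rw [Matrix.rank] at h
  obtain ⟨v, hv0, hv⟩ := finrank_eq_one_iff'.mp h
  set x := (v : Fin n → K) with hxdef
  have hx : x ≠ 0 := fun hx => hv0 (Subtype.ext hx)
  choose c hc using fun j => hv ⟨M.mulVecLin (Pi.single j 1), LinearMap.mem_range_self _ _⟩
  have hc' : ∀ j i, M i j = c j * x i := by
    intro j i
    have := congrArg (fun z : LinearMap.range M.mulVecLin => (z : Fin n → K) i) (hc j)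
    simpa [Matrix.mulVecLin_apply, Matrix.mulVec_single] using this.symm
  have hM : M = vecMulVec x c := by
    ext i j; rw [vecMulVec_apply, hc' j i]; ring
  have hc0 : c ≠ 0 := by
    rintro rfl
    rw [myVecMulVec_zero] at hM
    rw [hM, Matrix.rank_zero] at hrank
    simp at hrank
  exact ⟨x, c, hx, hc0, hM⟩

private lemma rank_vecMulVec_eq_one {x y : Fin n → K} (hx : x ≠ 0) (hy : y ≠ 0) :
    (vecMulVec x y).rank = 1 := by
  have hle : (vecMulVec x y).rank ≤ 1 := by
    rw [Matrix.rank]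
    have hsub : LinearMap.range (vecMulVec x y).mulVecLin ≤ K ∙ x := by
      rintro _ ⟨v, rfl⟩
      rw [Matrix.mulVecLin_apply, myVecMulVec_mulVec]
      exact Submodule.smul_mem _ _ (Submodule.mem_span_singleton_self x)
    calc finrank K (LinearMap.range (vecMulVec x y).mulVecLin)
        ≤ finrank K (K ∙ x) := Submodule.finrank_mono hsub
      _ = 1 := finrank_span_singleton hx
  have hne : (vecMulVec x y).rank ≠ 0 := by
    intro h0
    obtain ⟨j, hyj⟩ := Function.ne_iff.mp hy
    have hmem : (y j) • x ∈ LinearMap.range (vecMulVec x y).mulVecLin := by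
      refine ⟨Pi.single j 1, ?_⟩
      rw [Matrix.mulVecLin_apply, myVecMulVec_mulVec, dotProduct_single, mul_one]
    rw [Matrix.rank] at h0
    rw [Submodule.finrank_eq_zero.mp h0, Submodule.mem_bot] at hmem
    rcases smul_eq_zero.mp hmem with h | h
    · exact hyj h
    · exact hx h
  omega

private lemma exists_dual_sep {y1 y2 : Fin n → K} (hy2 : y2 ≠ 0)
    (h : ¬∃ c : K, y1 = c • y2) : ∃ v, y2 ⬝ᵥ v = 0 ∧ y1 ⬝ᵥ v ≠ 0 := by
  classical
  by_contra hvv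
  push_neg at hvv
  obtain ⟨i, hi⟩ := Function.ne_iff.mp hy2
  simp only [Pi.zero_apply] at hi
  apply h
  refine ⟨y1 i / y2 i, ?_⟩
  funext j
  have h2 : y2 ⬝ᵥ ((Pi.single j (1:K) : Fin n → K)
      - (y2 j / y2 i) • (Pi.single i (1:K) : Fin n → K)) = 0 := by
    rw [dotProduct_sub, dotProduct_smul, dotProduct_single, dotProduct_single,
      smul_eq_mul, mul_one, mul_one]
    field_simp
    ring
  have h1 := hvv _ h2
  rw [dotProduct_sub, dotProduct_smul, dotProduct_single, dotProduct_single,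
    smul_eq_mul, mul_one, mul_one, sub_eq_zero] at h1
  simp only [Pi.smul_apply, smul_eq_mul]
  rw [h1]
  field_simp

private lemma exists_smul_symm {x1 x2 : Fin n → K} (hx1 : x1 ≠ 0)
    (h : ∃ c : K, x1 = c • x2) : ∃ c : K, x2 = c • x1 := by
  obtain ⟨c, rfl⟩ := h
  have hc : c ≠ 0 := by rintro rfl; simp at hx1
  exact ⟨c⁻¹, by rw [smul_smul, inv_mul_cancel₀ hc, one_smul]⟩

private lemma rank_combo_ne_one {a b : K} (ha : a ≠ 0) (hb : b ≠ 0)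
    {x1 y1 x2 y2 : Fin n → K}
    (hx1 : x1 ≠ 0) (hy1 : y1 ≠ 0) (hx2 : x2 ≠ 0) (hy2 : y2 ≠ 0)
    (hx : ¬∃ c : K, x1 = c • x2) (hy : ¬∃ c : K, y1 = c • y2) :
    (a • vecMulVec x1 y1 + b • vecMulVec x2 y2).rank ≠ 1 := by
  intro hr
  obtain ⟨x, y, hx0, hy0, hM⟩ := exists_vecMulVec_of_rank_eq_one hr
  obtain ⟨v1, h21, h11⟩ := exists_dual_sep hy2 hy
  have hyrev : ¬∃ c : K, y2 = c • y1 := fun hc => hy (exists_smul_symm hy2 hc)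
  obtain ⟨v2, h12, h22⟩ := exists_dual_sep hy1 hyrev
  have e1 : (a * (y1 ⬝ᵥ v1)) • x1 = (y ⬝ᵥ v1) • x := by
    have h := congrArg (· *ᵥ v1) hM
    simpa only [add_mulVec, smul_mulVec, myVecMulVec_mulVec, h21, zero_smul,
      smul_zero, add_zero, smul_smul] using h
  have e2 : (b * (y2 ⬝ᵥ v2)) • x2 = (y ⬝ᵥ v2) • x := by
    have h := congrArg (· *ᵥ v2) hM
    simpa only [add_mulVec, smul_mulVec, myVecMulVec_mulVec, h12, zero_smul,
      smul_zero, zero_add, smul_smul] using h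
  have hc1 : a * (y1 ⬝ᵥ v1) ≠ 0 := mul_ne_zero ha h11
  have hc2 : b * (y2 ⬝ᵥ v2) ≠ 0 := mul_ne_zero hb h22
  have hx1x : x1 = ((y ⬝ᵥ v1) / (a * (y1 ⬝ᵥ v1))) • x := by
    rw [div_eq_mul_inv, mul_comm, ← smul_smul, ← e1, smul_smul,
      inv_mul_cancel₀ hc1, one_smul]
  have hx2x : x2 = ((y ⬝ᵥ v2) / (b * (y2 ⬝ᵥ v2))) • x := by
    rw [div_eq_mul_inv, mul_comm, ← smul_smul, ← e2, smul_smul,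
      inv_mul_cancel₀ hc2, one_smul]
  set c1 := (y ⬝ᵥ v1) / (a * (y1 ⬝ᵥ v1))
  set c2 := (y ⬝ᵥ v2) / (b * (y2 ⬝ᵥ v2))
  have hc2' : c2 ≠ 0 := fun h0 => hx2 (by rw [hx2x, h0, zero_smul])
  have hxx : x = c2⁻¹ • x2 := by
    rw [hx2x, smul_smul, inv_mul_cancel₀ hc2', one_smul]
  exact hx ⟨c1 * c2⁻¹, by rw [hx1x, hxx, smul_smul]⟩

private lemma exists_ne01 (hK : (3 : Cardinal) ≤ Cardinal.mk K) :
    ∃ t : K, t ≠ 0 ∧ t ≠ 1 :=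
  Cardinal.three_le hK 0 1

variable {Z : Submodule K (Matrix (Fin n) (Fin n) K)} {P : Matrix (Fin n) (Fin n) K}

private lemma pairwise_col_or_row (hK : (3 : Cardinal) ≤ Cardinal.mk K)
    (hall : ∀ A ∈ Z, IsNilpotent (P + A) ∧ (P + A).rank = 1)
    {A B : Matrix (Fin n) (Fin n) K} (hA : A ∈ Z) (hB : B ∈ Z)
    {x1 y1 x2 y2 : Fin n → K}
    (h1 : P + A = vecMulVec x1 y1) (h2 : P + B = vecMulVec x2 y2)
    (hx1 : x1 ≠ 0) (hy1 : y1 ≠ 0) (hx2 : x2 ≠ 0) (hy2 : y2 ≠ 0) :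
    (∃ c : K, x1 = c • x2) ∨ (∃ c : K, y1 = c • y2) := by
  by_contra h
  rw [not_or] at h
  obtain ⟨hx, hy⟩ := h
  obtain ⟨t, ht0, ht1⟩ := exists_ne01 hK
  have hC : (1 - t) • A + t • B ∈ Z := Z.add_mem (Z.smul_mem _ hA) (Z.smul_mem _ hB)
  have hr := (hall _ hC).2
  have hPC : P + ((1 - t) • A + t • B)
      = (1 - t) • vecMulVec x1 y1 + t • vecMulVec x2 y2 := by
    rw [← h1, ← h2]; module
  rw [hPC] at hr
  exact rank_combo_ne_one (sub_ne_zero_of_ne (Ne.symm ht1)) ht0 hx1 hy1 hx2 hy2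
    hx hy hr

private lemma dichotomy (hK : (3 : Cardinal) ≤ Cardinal.mk K)
    (hall : ∀ A ∈ Z, IsNilpotent (P + A) ∧ (P + A).rank = 1) :
    (∃ x : Fin n → K, x ≠ 0 ∧ ∀ A ∈ Z, ∃ y, P + A = vecMulVec x y) ∨
    (∃ y : Fin n → K, y ≠ 0 ∧ ∀ A ∈ Z, ∃ x, P + A = vecMulVec x y) := by
  have hdec : ∀ A ∈ Z, ∃ x y : Fin n → K, x ≠ 0 ∧ y ≠ 0 ∧ P + A = vecMulVec x y :=
    fun A hA => exists_vecMulVec_of_rank_eq_one (hall A hA).2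
  obtain ⟨x0, y0, hx0, hy0, h0⟩ := hdec 0 Z.zero_mem
  by_cases hc : ∀ A ∈ Z, ∃ y, P + A = vecMulVec x0 y
  · exact Or.inl ⟨x0, hx0, hc⟩
  · push_neg at hc
    obtain ⟨B, hB, hBn⟩ := hc
    obtain ⟨x1, y1, hx1, hy1, h1⟩ := hdec B hB
    refine Or.inr ⟨y0, hy0, fun A hA => ?_⟩
    obtain ⟨xa, ya, hxa, hya, ha⟩ := hdec A hA
    rcases pairwise_col_or_row hK hall hA Z.zero_mem ha h0 hxa hya hx0 hy0 with
      ⟨c, hcx⟩ | ⟨c, hcy⟩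
    · rcases pairwise_col_or_row hK hall hB Z.zero_mem h1 h0 hx1 hy1 hx0 hy0 with
        ⟨c', hc'⟩ | ⟨c'', hc''⟩
      · exact absurd (show P + B = vecMulVec x0 (c' • y1) by
          rw [h1, hc', mySmul_vecMulVec, ← myVecMulVec_smul]) (hBn (c' • y1))
      · rcases pairwise_col_or_row hK hall hA hB ha h1 hxa hya hx1 hy1 with
          ⟨d, hd⟩ | ⟨d, hd⟩
        · have hdne : d ≠ 0 := by rintro rfl; rw [zero_smul] at hd; exact hxa hd
          have hx1e : x1 = (d⁻¹ * c) • x0 := by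
            rw [← smul_smul, ← hcx, hd, smul_smul, inv_mul_cancel₀ hdne, one_smul]
          exact absurd (show P + B = vecMulVec x0 ((d⁻¹ * c) • y1) by
            rw [h1, hx1e, mySmul_vecMulVec, ← myVecMulVec_smul]) (hBn ((d⁻¹ * c) • y1))
        · exact ⟨(d * c'') • xa, by
            rw [ha, hd, hc'', smul_smul, myVecMulVec_smul, ← mySmul_vecMulVec]⟩
    · exact ⟨c • xa, by rw [ha, hcy, myVecMulVec_smul, ← mySmul_vecMulVec]⟩

private lemma key_bound
    (hall : ∀ A ∈ Z, IsNilpotent (P + A) ∧ (P + A).rank = 1)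
    {x : Fin n → K} (hx : x ≠ 0)
    (hcol : ∀ A ∈ Z, ∃ y, P + A = vecMulVec x y) :
    finrank K Z ≤ n - 2 := by
  classical
  obtain ⟨i, hxi⟩ := Function.ne_iff.mp hx
  simp only [Pi.zero_apply] at hxi
  choose yfun hyfun using hcol
  let φ : Matrix (Fin n) (Fin n) K →ₗ[K] (Fin n → K) :=
    { toFun := fun M j => (x i)⁻¹ * M i j
      map_add' := by intros M N; funext j; simp [Matrix.add_apply]; ring
      map_smul' := by intros c M; funext j; simp [Matrix.smul_apply, smul_eq_mul]; ring }
  have hφ : ∀ y : Fin n → K, φ (vecMulVec x y) = y := by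
    intro y; funext j
    show (x i)⁻¹ * (vecMulVec x y i j) = y j
    rw [vecMulVec_apply]
    field_simp
  have h00 := hyfun 0 Z.zero_mem
  set y0 := yfun 0 Z.zero_mem with hy0def
  have hdot : ∀ (A) (hA : A ∈ Z), yfun A hA ⬝ᵥ x = 0 :=
    fun A hA => dot_zero_of_nilpotent (by rw [← hyfun A hA]; exact (hall A hA).1)
  let ψ : Z →ₗ[K] (Fin n → K) := φ.comp Z.subtype
  have hψ : ∀ A : Z, ψ A = yfun A.1 A.2 - y0 := by
    intro A
    have hAeq : (A : Matrix (Fin n) (Fin n) K)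
        = vecMulVec x (yfun A.1 A.2) - vecMulVec x y0 := by
      rw [← hyfun A.1 A.2, ← h00]; abel
    show φ (A : Matrix (Fin n) (Fin n) K) = _
    conv_lhs => rw [hAeq]
    rw [map_sub, hφ, hφ]
  have hinj : Function.Injective ψ := by
    intro A B hAB
    rw [hψ A, hψ B, sub_left_inj] at hAB
    apply Subtype.ext
    have h2 := congrArg (vecMulVec x) hAB
    rw [← hyfun A.1 A.2, ← hyfun B.1 B.2] at h2
    exact add_left_cancel h2
  let f : (Fin n → K) →ₗ[K] K :=
    { toFun := fun y => y ⬝ᵥ x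
      map_add' := fun a b => add_dotProduct a b x
      map_smul' := fun c a => smul_dotProduct c a x }
  have hfsurj : Function.Surjective f := by
    intro c
    refine ⟨(c * (x i)⁻¹) • (Pi.single i 1 : Fin n → K), ?_⟩
    show ((c * (x i)⁻¹) • (Pi.single i 1 : Fin n → K)) ⬝ᵥ x = c
    rw [smul_dotProduct, single_dotProduct, one_mul, smul_eq_mul]
    field_simp
  have hker : finrank K (LinearMap.ker f) = n - 1 := by
    have h1 := LinearMap.finrank_range_add_finrank_ker f
    rw [LinearMap.range_eq_top.mpr hfsurj, finrank_top, finrank_self] at h1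
    have h2 : finrank K (Fin n → K) = n := by
      rw [Module.finrank_pi, Fintype.card_fin]
    rw [h2] at h1
    omega
  have hle : LinearMap.range ψ ≤ LinearMap.ker f := by
    rintro _ ⟨A, rfl⟩
    rw [LinearMap.mem_ker, hψ A]
    show (yfun A.1 A.2 - y0) ⬝ᵥ x = 0
    rw [sub_dotProduct, hdot A.1 A.2, hy0def, hdot 0 Z.zero_mem, sub_zero]
  have hlt : LinearMap.range ψ < LinearMap.ker f := by
    refine lt_of_le_of_ne hle fun heq => ?_
    have hmem : -y0 ∈ LinearMap.range ψ := by
      rw [heq, LinearMap.mem_ker]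
      show (-y0) ⬝ᵥ x = 0
      rw [neg_dotProduct, hy0def, hdot 0 Z.zero_mem, neg_zero]
    obtain ⟨A, hA⟩ := hmem
    rw [hψ A, sub_eq_iff_eq_add, neg_add_cancel] at hA
    have hr := (hall A.1 A.2).2
    rw [hyfun A.1 A.2, hA, myVecMulVec_zero] at hr
    simpa using hr
  have hlt2 : finrank K (LinearMap.range ψ) < n - 1 :=
    hker ▸ Submodule.finrank_lt_finrank_of_lt hlt
  have heqr : finrank K (LinearMap.range ψ) = finrank K Z :=
    LinearMap.finrank_range_of_inj hinj
  omega

private lemma upper_bound (hK : (3 : Cardinal) ≤ Cardinal.mk K)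
    (hall : ∀ A ∈ Z, IsNilpotent (P + A) ∧ (P + A).rank = 1) :
    finrank K Z ≤ n - 2 := by
  rcases dichotomy hK hall with ⟨x, hx, hcol⟩ | ⟨y, hy, hrow⟩
  · exact key_bound hall hx hcol
  · let e := Matrix.transposeLinearEquiv (Fin n) (Fin n) K K
    have hallt : ∀ B ∈ Z.map e.toLinearMap,
        IsNilpotent (Pᵀ + B) ∧ (Pᵀ + B).rank = 1 := by
      rintro _ ⟨A, hA, rfl⟩
      have hPA : Pᵀ + e.toLinearMap A = (P + A)ᵀ := by
        rw [show e.toLinearMap A = Aᵀ from rfl, transpose_add]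
      rw [hPA]
      obtain ⟨hnil, hr⟩ := hall A hA
      refine ⟨?_, ?_⟩
      · obtain ⟨k, hk⟩ := hnil
        exact ⟨k, by rw [← Matrix.transpose_pow, hk, transpose_zero]⟩
      · rw [Matrix.rank_transpose]; exact hr
    have hcolt : ∀ B ∈ Z.map e.toLinearMap, ∃ y', Pᵀ + B = vecMulVec y y' := by
      rintro _ ⟨A, hA, rfl⟩
      obtain ⟨xa, hxa⟩ := hrow A hA
      refine ⟨xa, ?_⟩
      rw [show e.toLinearMap A = Aᵀ from rfl, ← transpose_add, hxa,
        myVecMulVec_transpose]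
    have hb := key_bound hallt hy hcolt
    rwa [LinearEquiv.finrank_map_eq] at hb

end Aux

/-- The maximal dimension of an affine subspace of nilpotent `n × n` matrices
over a field `K` with at least `3` elements, all of rank exactly `1`, is `n-2`. -/
theorem stmt1 (n : ℕ) (hn : 2 ≤ n) (K : Type*) [Field K]
    (hK : (3 : Cardinal) ≤ Cardinal.mk K) :
    IsGreatest {d : ℕ | ∃ (Z : Submodule K (Matrix (Fin n) (Fin n) K))
        (P : Matrix (Fin n) (Fin n) K),
        (∀ A ∈ Z, IsNilpotent (P + A) ∧ (P + A).rank = 1) ∧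
        d = Module.finrank K Z}
      (n - 2) := by
  classical
  constructor
  · -- membership: explicit construction
    set i0 : Fin n := ⟨0, by omega⟩
    set i1 : Fin n := ⟨1, by omega⟩
    have hne : i0 ≠ i1 := by simp [i0, i1, Fin.ext_iff]
    set x : Fin n → K := Pi.single i0 1 with hxdef
    set e1 : Fin n → K := Pi.single i1 1 with he1def
    have hx0 : x ≠ 0 := fun h => by
      have := congrFun h i0; simp [hxdef, Pi.single_eq_same] at this
    let f2 : (Fin n → K) →ₗ[K] K × K := (LinearMap.proj i0).prod (LinearMap.proj i1)
    let W : Submodule K (Fin n → K) := LinearMap.ker f2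
    let L : (Fin n → K) →ₗ[K] Matrix (Fin n) (Fin n) K :=
      { toFun := fun w => vecMulVec x w
        map_add' := fun a b => myVecMulVec_add x a b
        map_smul' := fun c a => by simp [myVecMulVec_smul] }
    refine ⟨W.map L, vecMulVec x e1, ?_, ?_⟩
    · rintro _ ⟨w, hw, rfl⟩
      have hwk : f2 w = 0 := hw
      have hwi0 : w i0 = 0 := congrArg Prod.fst hwk
      have hwi1 : w i1 = 0 := congrArg Prod.snd hwk
      have hLw : L w = vecMulVec x w := rfl
      have hsum : vecMulVec x e1 + L w = vecMulVec x (e1 + w) := by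
        rw [hLw, myVecMulVec_add]
      rw [hsum]
      have hy : e1 + w ≠ 0 := fun h => by
        have := congrFun h i1
        simp [he1def, Pi.single_eq_same, hwi1] at this
      refine ⟨isNilpotent_vecMulVec ?_, rank_vecMulVec_eq_one hx0 hy⟩
      rw [hxdef, dotProduct_single, mul_one, Pi.add_apply, hwi0, add_zero, he1def]
      simp [Pi.single_apply, hne]
    · -- dimension computation
      have hLinj : Function.Injective L := by
        intro a b hab
        funext j
        have := congrArg (fun M => M i0 j) hab
        simpa [L, vecMulVec_apply, hxdef, Pi.single_eq_same] using this
      have h1 : Module.finrank K (W.map L) = Module.finrank K W :=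
        (Submodule.equivMapOfInjective L hLinj W).finrank_eq.symm
      have hf2surj : Function.Surjective f2 := by
        rintro ⟨a, b⟩
        refine ⟨a • (Pi.single i0 1 : Fin n → K) + b • (Pi.single i1 1 : Fin n → K), ?_⟩
        have h1' : (a • (Pi.single i0 1 : Fin n → K)
            + b • (Pi.single i1 1 : Fin n → K)) i0 = a := by
          simp [Pi.single_eq_same, Pi.single_eq_of_ne hne, Pi.single_eq_of_ne hne.symm]
        have h2' : (a • (Pi.single i0 1 : Fin n → K)
            + b • (Pi.single i1 1 : Fin n → K)) i1 = b := by
          simp [Pi.single_eq_same, Pi.single_eq_of_ne hne, Pi.single_eq_of_ne hne.symm]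
        exact Prod.ext h1' h2'
      have hW : Module.finrank K W = n - 2 := by
        have h2 := LinearMap.finrank_range_add_finrank_ker f2
        rw [LinearMap.range_eq_top.mpr hf2surj, finrank_top] at h2
        have h3 : finrank K (K × K) = 2 := by
          rw [Module.finrank_prod, finrank_self]
        have h4 : finrank K (Fin n → K) = n := by
          rw [Module.finrank_pi, Fintype.card_fin]
        rw [h3, h4] at h2
        show finrank K (LinearMap.ker f2) = n - 2
        omega
      rw [h1, hW]
  · rintro d ⟨Z, P, hall, rfl⟩
    exact upper_bound hK hall
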